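/- arXiv:2502.09853 — 2 statements merged into one kernel-verified Lean document; each statement's English description precedes it below -/
import Mathlib

section
/- (Reverse Jensen inequality) If X₁,…,Xₙ are independent non-negative random variables, then for every ε > 0, E(exp{−Σ_{i=1}^n X_i}) ≤ exp{−e^{−ε} Σ_{i=1}^n E(X_i 1_{{X_i ≤ ε}})/P(X_i ≤ ε)}, i.e., ≤ exp{−e^{−ε} Σ_i E(X_i | X_i ≤ ε)} whenever each P(X_i ≤ ε) > 0. -/
open MeasureTheory ProbabilityTheory

private lemma reverse_jensen_key {Ω : Type*} [MeasurableSpace Ω] (Pr : Measure Ω)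
    [IsProbabilityMeasure Pr] (X : Ω → ℝ) (hm : Measurable X) (hnn : ∀ ω, 0 ≤ X ω)
    (ε : ℝ) (hε : 0 < ε) (hp : 0 < Pr {ω | X ω ≤ ε}) :
    ∫ ω, Real.exp (-X ω) ∂Pr ≤
      Real.exp (-Real.exp (-ε) *
        ((∫ ω in {ω | X ω ≤ ε}, X ω ∂Pr) / (Pr {ω | X ω ≤ ε}).toReal)) := by
  set A : Set Ω := {ω | X ω ≤ ε} with hA_def
  have hA : MeasurableSet A := measurableSet_le hm measurable_const
  set p : ℝ := (Pr A).toReal with hp_def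
  set M : ℝ := ∫ ω in A, X ω ∂Pr with hM_def
  have hppos : 0 < p := ENNReal.toReal_pos hp.ne' (measure_ne_top _ _)
  have hple : p ≤ 1 := by
    have := prob_le_one (μ := Pr) (s := A)
    simpa [hp_def] using ENNReal.toReal_mono ENNReal.one_ne_top this
  -- integrability of exp(-X)
  have hexp_int : Integrable (fun ω => Real.exp (-X ω)) Pr := by
    refine Integrable.mono' (integrable_const 1) (hm.neg.exp.aestronglyMeasurable)
      (Filter.Eventually.of_forall fun ω => ?_)
    rw [Real.norm_eq_abs, abs_of_pos (Real.exp_pos _)]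
    exact Real.exp_le_one_iff.mpr (neg_nonpos.mpr (hnn ω))
  -- X integrable on A
  have hX_intA : IntegrableOn X A Pr := by
    refine Integrable.mono' (integrable_const ε) (hm.aestronglyMeasurable.restrict)
      (ae_restrict_of_forall_mem hA fun ω hω => ?_)
    rw [Real.norm_eq_abs, abs_of_nonneg (hnn ω)]
    exact hω
  have hM_nonneg : 0 ≤ M := setIntegral_nonneg hA fun ω _ => hnn ω
  have hM_le : M ≤ ε * p := by
    have : ∫ ω in A, X ω ∂Pr ≤ ∫ _ in A, ε ∂Pr :=
      setIntegral_mono_on hX_intA (integrable_const ε) hA fun ω hω => hω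
    simpa [setIntegral_const, mul_comm, measureReal_def] using this
  -- split integral
  have hsplit : ∫ ω, Real.exp (-X ω) ∂Pr =
      (∫ ω in A, Real.exp (-X ω) ∂Pr) + ∫ ω in Aᶜ, Real.exp (-X ω) ∂Pr :=
    (integral_add_compl hA hexp_int).symm
  -- bound on A
  have hboundA : ∫ ω in A, Real.exp (-X ω) ∂Pr ≤ p - Real.exp (-ε) * M := by
    have hmono : ∫ ω in A, Real.exp (-X ω) ∂Pr ≤
        ∫ ω in A, (1 - Real.exp (-ε) * X ω) ∂Pr := by
      refine setIntegral_mono_on hexp_int.integrableOn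
        ((integrable_const 1).sub (hX_intA.const_mul _)) hA fun ω hω => ?_
      -- exp(-x) ≤ 1 - e^{-ε} x for 0 ≤ x ≤ ε
      have hx0 : 0 ≤ X ω := hnn ω
      have hxε : X ω ≤ ε := hω
      -- exp(-ε) ≤ exp(-x), and exp(-x)(1+x) ≤ exp(-x)exp(x) = 1
      have h1 : Real.exp (-ε) ≤ Real.exp (-X ω) := Real.exp_le_exp.mpr (by linarith)
      have h2 : Real.exp (-X ω) * (1 + X ω) ≤ 1 := by
        have h3 : 1 + X ω ≤ Real.exp (X ω) := by linarith [Real.add_one_le_exp (X ω)]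
        have h4 := mul_le_mul_of_nonneg_left h3 (Real.exp_pos (-X ω)).le
        rwa [← Real.exp_add, neg_add_cancel, Real.exp_zero] at h4
      nlinarith [mul_le_mul_of_nonneg_right h1 hx0]
    have hcalc : ∫ ω in A, (1 - Real.exp (-ε) * X ω) ∂Pr = p - Real.exp (-ε) * M := by
      rw [integral_sub (integrable_const 1) (hX_intA.const_mul _), integral_const_mul,
        setIntegral_const]
      simp [hp_def, hM_def, measureReal_def]
    linarith [hmono, hcalc.le, hcalc.ge]
  -- bound on Aᶜ
  have hpc : (Pr Aᶜ).toReal = 1 - p := by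
    have h := measure_add_measure_compl (μ := Pr) hA
    have : p + (Pr Aᶜ).toReal = 1 := by
      rw [hp_def, ← ENNReal.toReal_add (measure_ne_top _ _) (measure_ne_top _ _), h]
      simp
    linarith
  have hboundAc : ∫ ω in Aᶜ, Real.exp (-X ω) ∂Pr ≤ Real.exp (-ε) * (1 - p) := by
    have hmono : ∫ ω in Aᶜ, Real.exp (-X ω) ∂Pr ≤ ∫ _ in Aᶜ, Real.exp (-ε) ∂Pr := by
      refine setIntegral_mono_on hexp_int.integrableOn (integrable_const _) hA.compl
        fun ω hω => ?_
      have : ε < X ω := lt_of_not_ge hω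
      exact Real.exp_le_exp.mpr (by linarith)
    rw [setIntegral_const, measureReal_def, hpc, smul_eq_mul, mul_comm] at hmono
    exact hmono
  -- final arithmetic
  set q : ℝ := Real.exp (-ε) with hq_def
  have hq_pos : 0 < q := Real.exp_pos _
  have hqε : q * (1 + ε) ≤ 1 := by
    have h3 : 1 + ε ≤ Real.exp ε := by linarith [Real.add_one_le_exp ε]
    have h4 := mul_le_mul_of_nonneg_left h3 (Real.exp_pos (-ε)).le
    rwa [← Real.exp_add, neg_add_cancel, Real.exp_zero] at h4
  have hstep : 1 - (1 - q) * (1 - p) - q * M ≤ 1 - q * M / p := by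
    have h1 : q * M * (1 - p) ≤ q * (ε * p) * (1 - p) :=
      mul_le_mul_of_nonneg_right (mul_le_mul_of_nonneg_left hM_le hq_pos.le) (by linarith)
    have h2 : q * ε ≤ 1 - q := by nlinarith [hqε]
    have h3 : q * (ε * p) * (1 - p) ≤ (1 - q) * p * (1 - p) := by
      nlinarith [mul_nonneg hppos.le (sub_nonneg.mpr hple)]
    have hdiv : q * M / p ≤ q * M + (1 - q) * (1 - p) := by
      rw [div_le_iff₀ hppos]
      nlinarith [h1, h3]
    linarith
  have hfinal : 1 - q * M / p ≤ Real.exp (-(q * M / p)) := by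
    have := Real.add_one_le_exp (-(q * M / p))
    linarith
  calc ∫ ω, Real.exp (-X ω) ∂Pr ≤ (p - q * M) + q * (1 - p) := by
        rw [hsplit]; exact add_le_add hboundA hboundAc
    _ = 1 - (1 - q) * (1 - p) - q * M := by ring
    _ ≤ 1 - q * M / p := hstep
    _ ≤ Real.exp (-(q * M / p)) := hfinal
    _ = Real.exp (-q * (M / p)) := by ring_nf

/-- Reverse Jensen inequality: for independent nonnegative random
variables `X₁,…,Xₙ` and every `ε > 0` with `P(Xᵢ ≤ ε) > 0`,
`E(e^{−ΣXᵢ}) ≤ exp(−e^{−ε} Σᵢ E(Xᵢ | Xᵢ ≤ ε))`. -/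
theorem reverse_jensen {Ω : Type*} [MeasurableSpace Ω] (Pr : Measure Ω)
    [IsProbabilityMeasure Pr] {n : ℕ} (X : Fin n → Ω → ℝ)
    (hmeas : ∀ i, Measurable (X i)) (hnn : ∀ i ω, 0 ≤ X i ω)
    (hindep : iIndepFun X Pr)
    (ε : ℝ) (hε : 0 < ε) (hpos : ∀ i, 0 < Pr {ω | X i ω ≤ ε}) :
    ∫ ω, Real.exp (-∑ i, X i ω) ∂Pr ≤
      Real.exp (-Real.exp (-ε) *
        ∑ i, (∫ ω in {ω | X i ω ≤ ε}, X i ω ∂Pr) / (Pr {ω | X i ω ≤ ε}).toReal) := by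
  have hstep1 : ∫ ω, Real.exp (-∑ i, X i ω) ∂Pr = ∏ i, mgf (X i) Pr (-1) := by
    rw [← hindep.mgf_sum hmeas Finset.univ]
    simp [mgf, Finset.sum_apply, neg_one_mul]
  rw [hstep1]
  have hkey : ∀ i, mgf (X i) Pr (-1) ≤
      Real.exp (-Real.exp (-ε) *
        ((∫ ω in {ω | X i ω ≤ ε}, X i ω ∂Pr) / (Pr {ω | X i ω ≤ ε}).toReal)) := by
    intro i
    have := reverse_jensen_key Pr (X i) (hmeas i) (hnn i) ε hε (hpos i)
    simpa [mgf, neg_one_mul] using this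
  calc ∏ i, mgf (X i) Pr (-1)
      ≤ ∏ i, Real.exp (-Real.exp (-ε) *
          ((∫ ω in {ω | X i ω ≤ ε}, X i ω ∂Pr) / (Pr {ω | X i ω ≤ ε}).toReal)) :=
        Finset.prod_le_prod (fun i _ => mgf_nonneg) (fun i _ => hkey i)
    _ = Real.exp (∑ i, -Real.exp (-ε) *
          ((∫ ω in {ω | X i ω ≤ ε}, X i ω ∂Pr) / (Pr {ω | X i ω ≤ ε}).toReal)) :=
        (Real.exp_sum _ _).symm
    _ = Real.exp (-Real.exp (-ε) *
          ∑ i, (∫ ω in {ω | X i ω ≤ ε}, X i ω ∂Pr) / (Pr {ω | X i ω ≤ ε}).toReal) := by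
        rw [← Finset.mul_sum]
end

section
/- Let α, θ > 0 and let μ be the measure on [0,∞) given by μ(dℓ) = δ₀(dℓ) + (Σ_{n≥0} (1/(n!(n+1)!)) (α²θ/2)^{n+1} ℓⁿ) 1_{[0,∞)}(ℓ) dℓ. Then μ has Laplace transform ∫_{[0,∞)} e^{−sℓ} μ(dℓ) = exp(α²θ/(2s)) for all s > 0. -/
open MeasureTheory

lemma bessel_summable (c : ℝ) (hc : 0 ≤ c) (ℓ : ℝ) :
    Summable (fun n : ℕ => (1 / ((n.factorial : ℝ) * ((n + 1).factorial : ℝ))) *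
      c ^ (n + 1) * ℓ ^ n) := by
  apply Summable.of_norm
  have hg : Summable (fun n : ℕ => c * ((c * |ℓ|) ^ n / (n.factorial : ℝ))) :=
    (Real.summable_pow_div_factorial _).mul_left c
  refine Summable.of_nonneg_of_le (fun n => norm_nonneg _) (fun n => ?_) hg
  have hfac1 : (1 : ℝ) ≤ ((n + 1).factorial : ℝ) := by
    exact_mod_cast Nat.one_le_iff_ne_zero.mpr (Nat.factorial_ne_zero _)
  have hfacpos : (0 : ℝ) < (n.factorial : ℝ) := by positivity
  have h1 : ‖(1 / ((n.factorial : ℝ) * ((n + 1).factorial : ℝ))) * c ^ (n + 1) * ℓ ^ n‖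
      = c ^ (n + 1) * |ℓ| ^ n / ((n.factorial : ℝ) * ((n + 1).factorial : ℝ)) := by
    rw [Real.norm_eq_abs, abs_mul, abs_mul, abs_pow, abs_pow, abs_of_nonneg hc,
      abs_of_nonneg (by positivity : (0:ℝ) ≤ 1 / ((n.factorial : ℝ) * ((n + 1).factorial : ℝ)))]
    ring
  rw [h1]
  have h2 : c * ((c * |ℓ|) ^ n / (n.factorial : ℝ))
      = c ^ (n + 1) * |ℓ| ^ n / (n.factorial : ℝ) := by
    rw [mul_pow, pow_succ]; ring
  rw [h2]
  gcongr
  nlinarith [hfacpos, hfac1]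

lemma bessel_measurable (c : ℝ) (hc : 0 ≤ c) :
    Measurable (fun ℓ : ℝ => ∑' n : ℕ, (1 / ((n.factorial : ℝ) * ((n + 1).factorial : ℝ))) *
      c ^ (n + 1) * ℓ ^ n) := by
  have hmeas : ∀ N : ℕ, Measurable (fun ℓ : ℝ => ∑ n ∈ Finset.range N,
      (1 / ((n.factorial : ℝ) * ((n + 1).factorial : ℝ))) * c ^ (n + 1) * ℓ ^ n) :=
    fun N => Finset.measurable_sum _ fun n _ => by fun_prop
  have hlim : ∀ ℓ : ℝ, Filter.Tendsto (fun N : ℕ => ∑ n ∈ Finset.range N,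
      (1 / ((n.factorial : ℝ) * ((n + 1).factorial : ℝ))) * c ^ (n + 1) * ℓ ^ n)
      Filter.atTop (nhds (∑' n : ℕ,
      (1 / ((n.factorial : ℝ) * ((n + 1).factorial : ℝ))) * c ^ (n + 1) * ℓ ^ n)) :=
    fun ℓ => (bessel_summable c hc ℓ).hasSum.tendsto_sum_nat
  exact measurable_of_tendsto_metrizable' Filter.atTop hmeas (tendsto_pi_nhds.mpr hlim)

lemma integral_pow_exp (n : ℕ) {s : ℝ} (hs : 0 < s) :
    ∫ t in Set.Ioi (0:ℝ), t ^ n * Real.exp (-(s * t)) = (n.factorial : ℝ) / s ^ (n + 1) := by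
  have h := Real.integral_rpow_mul_exp_neg_mul_Ioi (a := (n : ℝ) + 1) (by positivity) hs
  have hL : ∫ t in Set.Ioi (0:ℝ), t ^ ((n : ℝ) + 1 - 1) * Real.exp (-(s * t))
      = ∫ t in Set.Ioi (0:ℝ), t ^ n * Real.exp (-(s * t)) := by
    refine setIntegral_congr_fun measurableSet_Ioi (fun t _ => ?_)
    rw [add_sub_cancel_right, Real.rpow_natCast]
  rw [hL] at h
  rw [h, Real.Gamma_nat_eq_factorial]
  have h2 : ((n : ℝ) + 1) = ((n + 1 : ℕ) : ℝ) := by push_cast; ring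
  rw [h2, Real.rpow_natCast]
  rw [div_pow, one_pow]
  field_simp

lemma integrable_pow_exp (n : ℕ) {s : ℝ} (hs : 0 < s) :
    IntegrableOn (fun t : ℝ => t ^ n * Real.exp (-(s * t))) (Set.Ioi 0) := by
  have h := integrableOn_rpow_mul_exp_neg_mul_rpow
    (p := 1) (s := (n : ℝ)) (b := s)
    (lt_of_lt_of_le (by norm_num) (Nat.cast_nonneg n)) zero_lt_one hs
  refine h.congr_fun (fun t ht => ?_) measurableSet_Ioi
  beta_reduce
  rw [Real.rpow_one, Real.rpow_natCast, neg_mul]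

lemma bessel_coeff_eq (c s : ℝ) (hs : s ≠ 0) (n : ℕ) :
    (1 / ((n.factorial : ℝ) * ((n + 1).factorial : ℝ))) * c ^ (n + 1) *
      ((n.factorial : ℝ) / s ^ (n + 1)) = (c / s) ^ (n + 1) / ((n + 1).factorial : ℝ) := by
  have hfn : ((n.factorial : ℝ)) ≠ 0 := by positivity
  have hfn1 : (((n + 1).factorial : ℝ)) ≠ 0 := by positivity
  have hsn : s ^ (n + 1) ≠ 0 := pow_ne_zero _ hs
  rw [div_pow]
  field_simp

lemma exp_eq_one_add_tsum (x : ℝ) :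
    Real.exp x = 1 + ∑' n : ℕ, x ^ (n + 1) / (((n + 1).factorial : ℕ) : ℝ) := by
  have h : Real.exp x = ∑' n : ℕ, x ^ n / (n.factorial : ℝ) := by
    rw [Real.exp_eq_exp_ℝ, NormedSpace.exp_eq_tsum_div]
  rw [h, Summable.tsum_eq_zero_add (Real.summable_pow_div_factorial x)]
  simp

/-- the measure `μ(dℓ) = δ₀(dℓ) + (Σ_{n≥0} (1/(n!(n+1)!)) (α²θ/2)^{n+1} ℓⁿ) 1_{[0,∞)}(ℓ) dℓ`
has Laplace transform `∫ e^{−sℓ} μ(dℓ) = exp(α²θ/(2s))` for every `s > 0`. -/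
theorem laplace_transform_bessel_measure (α θ : ℝ) (hα : 0 < α) (hθ : 0 < θ) :
    ∀ s : ℝ, 0 < s →
      (∫ ℓ, Real.exp (-s * ℓ)
          ∂(Measure.dirac (0 : ℝ) +
            volume.withDensity (fun ℓ => ENNReal.ofReal
              (Set.indicator (Set.Ici (0 : ℝ))
                (fun ℓ => ∑' n : ℕ,
                  (1 / ((n.factorial : ℝ) * ((n + 1).factorial : ℝ))) *
                    (α ^ 2 * θ / 2) ^ (n + 1) * ℓ ^ n) ℓ)))) =
        Real.exp (α ^ 2 * θ / (2 * s)) := by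
  intro s hs
  set c : ℝ := α ^ 2 * θ / 2 with hcdef
  have hc : 0 < c := by positivity
  set F : ℝ → ℝ := fun ℓ => ∑' n : ℕ,
    (1 / ((n.factorial : ℝ) * ((n + 1).factorial : ℝ))) * c ^ (n + 1) * ℓ ^ n with hF
  have hFmeas : Measurable F := bessel_measurable c hc.le
  have hdens : Measurable (fun ℓ => ENNReal.ofReal ((Set.Ici (0:ℝ)).indicator F ℓ)) :=
    ENNReal.measurable_ofReal.comp (hFmeas.indicator measurableSet_Ici)
  have hexp_meas : Measurable fun ℓ : ℝ => Real.exp (-s * ℓ) := by fun_prop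
  rw [integral_eq_lintegral_of_nonneg_ae (Filter.Eventually.of_forall fun ℓ => (Real.exp_pos _).le)
      hexp_meas.aestronglyMeasurable]
  rw [lintegral_add_measure, lintegral_dirac]
  rw [lintegral_withDensity_eq_lintegral_mul _ hdens hexp_meas.ennreal_ofReal]
  have hpt : ∀ ℓ : ℝ, ((fun ℓ => ENNReal.ofReal ((Set.Ici (0:ℝ)).indicator F ℓ)) *
      fun ℓ => ENNReal.ofReal (Real.exp (-s * ℓ))) ℓ =
      (Set.Ici (0:ℝ)).indicator
        (fun ℓ => ENNReal.ofReal (F ℓ) * ENNReal.ofReal (Real.exp (-s * ℓ))) ℓ := by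
    intro ℓ
    by_cases h : ℓ ∈ Set.Ici (0:ℝ) <;> simp [h]
  rw [lintegral_congr hpt, lintegral_indicator measurableSet_Ici]
  have key : (∫⁻ ℓ in Set.Ici (0:ℝ),
      ENNReal.ofReal (F ℓ) * ENNReal.ofReal (Real.exp (-s * ℓ)))
      = ∑' n : ℕ, ENNReal.ofReal ((c / s) ^ (n + 1) / ((n + 1).factorial : ℝ)) := by
    have h1 : ∀ ℓ ∈ Set.Ici (0:ℝ),
        ENNReal.ofReal (F ℓ) * ENNReal.ofReal (Real.exp (-s * ℓ)) =
        ∑' n : ℕ, ENNReal.ofReal ((1 / ((n.factorial : ℝ) * ((n + 1).factorial : ℝ))) *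
          c ^ (n + 1) * ℓ ^ n * Real.exp (-s * ℓ)) := by
      intro ℓ hℓ
      have hℓ0 : (0:ℝ) ≤ ℓ := hℓ
      have hnn : ∀ n : ℕ, 0 ≤ (1 / ((n.factorial : ℝ) * ((n + 1).factorial : ℝ))) *
          c ^ (n + 1) * ℓ ^ n :=
        fun n => mul_nonneg (mul_nonneg (by positivity) (by positivity)) (pow_nonneg hℓ0 n)
      rw [hF]
      rw [ENNReal.ofReal_tsum_of_nonneg hnn (bessel_summable c hc.le ℓ),
        ← ENNReal.tsum_mul_right]
      exact tsum_congr fun n => (ENNReal.ofReal_mul (hnn n)).symm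
    rw [setLIntegral_congr_fun measurableSet_Ici h1]
    rw [lintegral_tsum (fun n => by fun_prop)]
    congr 1
    funext n
    have hnn' : ∀ ℓ ∈ Set.Ici (0:ℝ), 0 ≤ (1 / ((n.factorial : ℝ) * ((n + 1).factorial : ℝ))) *
        c ^ (n + 1) * ℓ ^ n * Real.exp (-s * ℓ) := fun ℓ hℓ =>
      mul_nonneg (mul_nonneg (mul_nonneg (by positivity) (by positivity))
        (pow_nonneg hℓ n)) (Real.exp_pos _).le
    have hint : IntegrableOn
        (fun ℓ : ℝ => (1 / ((n.factorial : ℝ) * ((n + 1).factorial : ℝ))) *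
          c ^ (n + 1) * ℓ ^ n * Real.exp (-s * ℓ)) (Set.Ici 0) := by
      rw [integrableOn_Ici_iff_integrableOn_Ioi]
      have h := ((integrable_pow_exp n hs).const_mul
        ((1 / ((n.factorial : ℝ) * ((n + 1).factorial : ℝ))) * c ^ (n + 1)))
      refine IntegrableOn.congr_fun h (fun t _ => ?_) measurableSet_Ioi
      rw [neg_mul]
      ring
    rw [← ofReal_integral_eq_lintegral_ofReal hint
      ((ae_restrict_iff' measurableSet_Ici).mpr (Filter.Eventually.of_forall hnn'))]
    congr 1
    rw [MeasureTheory.integral_Ici_eq_integral_Ioi]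
    have hre : ∀ ℓ : ℝ, (1 / ((n.factorial : ℝ) * ((n + 1).factorial : ℝ))) *
        c ^ (n + 1) * ℓ ^ n * Real.exp (-s * ℓ) =
        ((1 / ((n.factorial : ℝ) * ((n + 1).factorial : ℝ))) * c ^ (n + 1)) *
        (ℓ ^ n * Real.exp (-(s * ℓ))) := by
      intro ℓ; rw [neg_mul]; ring
    simp_rw [hre]
    rw [integral_const_mul, integral_pow_exp n hs]
    exact bessel_coeff_eq c s (ne_of_gt hs) n
  rw [key]
  have hsum2 : Summable (fun n : ℕ => (c / s) ^ (n + 1) / ((n + 1).factorial : ℝ)) := by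
    have h := (summable_nat_add_iff (f := fun k : ℕ => (c / s) ^ k / (k.factorial : ℝ)) 1).mpr
      (Real.summable_pow_div_factorial (c / s))
    exact h
  rw [← ENNReal.ofReal_tsum_of_nonneg (fun n => by positivity) hsum2]
  have h0 : Real.exp (-s * 0) = 1 := by norm_num
  rw [h0]
  rw [← ENNReal.ofReal_add zero_le_one (tsum_nonneg (fun n => by positivity))]
  have hcs : α ^ 2 * θ / (2 * s) = c / s := by rw [hcdef]; field_simp
  rw [hcs, exp_eq_one_add_tsum (c / s)]
  exact ENNReal.toReal_ofReal (add_nonneg zero_le_one (tsum_nonneg fun n => by positivity))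
end
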